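/- Let p be a prime and m > 1. The dihedral quandle R_{p^m} is an Alexander extension of R_{p^{m-1}} by R_p: there is a bijection f: R_{p^m} → R_p × R_{p^{m-1}} and a function φ: R_{p^{m-1}} × R_{p^{m-1}} → R_p such that f(e₁*e₂) = (a₁*a₂ + φ(x₁,x₂), x₁*x₂) whenever f(e_i) = (a_i, x_i), and consequently φ is a twisted 2-cocycle (with T acting as -1). -/

import Mathlib

namespace DihedralAux

variable (p m : ℕ)

/-- top base-`p` digit -/
def c (A : ZMod (p ^ m)) : ZMod p := ((A.val / p ^ (m - 1) : ℕ) : ZMod p)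

lemma c_add_q (hp : p.Prime) (hm : 1 ≤ m) (A : ZMod (p ^ m)) :
    c p m (A + ((p ^ (m - 1) : ℕ) : ZMod (p ^ m))) = c p m A + 1 := by
  haveI : NeZero (p ^ m) := ⟨pow_ne_zero _ hp.pos.ne'⟩
  have hqp : p ^ (m - 1) * p = p ^ m := by rw [← pow_succ]; congr 1; omega
  have hq0 : 0 < p ^ (m - 1) := pow_pos hp.pos _
  have hqlt : p ^ (m - 1) < p ^ m := Nat.pow_lt_pow_right hp.one_lt (by omega)
  have hv : (((p ^ (m - 1) : ℕ) : ZMod (p ^ m))).val = p ^ (m - 1) :=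
    ZMod.val_cast_of_lt hqlt
  have hadd : (A + ((p ^ (m - 1) : ℕ) : ZMod (p ^ m))).val
      = (A.val + p ^ (m - 1)) % p ^ m := by
    rw [ZMod.val_add, hv]
  set q : ℕ := p ^ (m - 1) with hq
  set a : ℕ := A.val with ha
  have haN : a < p ^ m := ZMod.val_lt A
  set d : ℕ := a / q with hd
  set r : ℕ := a % q with hr
  have hrq : r < q := Nat.mod_lt _ hq0
  have haeq : q * d + r = a := Nat.div_add_mod a q
  have hdp : d < p := by
    exact Nat.div_lt_of_lt_mul (by rw [hqp]; exact haN)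
  unfold c
  rw [hadd]
  by_cases h : a + q < p ^ m
  · rw [Nat.mod_eq_of_lt h, Nat.add_div_right _ hq0]
    push_cast
    ring
  · push_neg at h
    have h2 : a + q < 2 * p ^ m := by omega
    have hmod : (a + q) % p ^ m = a + q - p ^ m := by
      rw [Nat.mod_eq_sub_mod h, Nat.mod_eq_of_lt (by omega)]
    have hdeq : d + 1 = p := by
      have h3 : q * p ≤ q * d + r + q := by rw [hqp]; omega
      have h4 : q * p < q * (d + 2) := by nlinarith
      have := Nat.lt_of_mul_lt_mul_left h4
      omega
    have hsub : a + q - p ^ m = r := by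
      have h5 : a + q = q * (d + 1) + r := by rw [Nat.mul_add, mul_one]; omega
      rw [h5, hdeq, hqp]; omega
    rw [hmod, hsub, Nat.div_eq_of_lt hrq]
    have hcast : (d : ZMod p) = (p : ℕ) - 1 := by
      rw [← hdeq]; push_cast; ring
    rw [hcast]
    push_cast [ZMod.natCast_self]
    ring

lemma c_add_nsmul (hp : p.Prime) (hm : 1 ≤ m) (A : ZMod (p ^ m)) (k : ℕ) :
    c p m (A + k * ((p ^ (m - 1) : ℕ) : ZMod (p ^ m))) = c p m A + k := by
  induction k with
  | zero => simp
  | succ n ih =>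
      have : A + (↑(n + 1) : ZMod (p ^ m)) * ((p ^ (m - 1) : ℕ) : ZMod (p ^ m))
          = (A + n * ((p ^ (m - 1) : ℕ) : ZMod (p ^ m)))
            + ((p ^ (m - 1) : ℕ) : ZMod (p ^ m)) := by push_cast; ring
      rw [this, c_add_q p m hp hm, ih]
      push_cast; ring

lemma c_sub_nsmul (hp : p.Prime) (hm : 1 ≤ m) (A : ZMod (p ^ m)) (k : ℕ) :
    c p m (A - k * ((p ^ (m - 1) : ℕ) : ZMod (p ^ m))) = c p m A - k := by
  have := c_add_nsmul p m hp hm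
    (A - k * ((p ^ (m - 1) : ℕ) : ZMod (p ^ m))) k
  rw [sub_add_cancel] at this
  rw [this]; ring

end DihedralAux

namespace DihedralAux2
open DihedralAux

variable (p m : ℕ)

def L (x : ZMod (p ^ (m - 1))) : ZMod (p ^ m) := (x.val : ZMod (p ^ m))

lemma val_L (hp : p.Prime) (hm : 1 ≤ m) (x : ZMod (p ^ (m - 1))) :
    (L p m x).val = x.val := by
  haveI : NeZero (p ^ (m - 1)) := ⟨pow_ne_zero _ hp.pos.ne'⟩
  have hqlt : p ^ (m - 1) < p ^ m := Nat.pow_lt_pow_right hp.one_lt (by omega)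
  exact ZMod.val_cast_of_lt (lt_trans (ZMod.val_lt x) hqlt)

lemma c_L (hp : p.Prime) (hm : 1 ≤ m) (x : ZMod (p ^ (m - 1))) :
    c p m (L p m x) = 0 := by
  haveI : NeZero (p ^ (m - 1)) := ⟨pow_ne_zero _ hp.pos.ne'⟩
  unfold c
  rw [val_L p m hp hm, Nat.div_eq_of_lt (ZMod.val_lt x)]
  simp

lemma decomp (hp : p.Prime) (hm : 1 ≤ m) (e : ZMod (p ^ m)) :
    e = L p m ((e.val : ℕ) : ZMod (p ^ (m - 1)))
      + ((e.val / p ^ (m - 1) : ℕ) : ZMod (p ^ m))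
        * ((p ^ (m - 1) : ℕ) : ZMod (p ^ m)) := by
  haveI : NeZero (p ^ m) := ⟨pow_ne_zero _ hp.pos.ne'⟩
  have h1 : (((e.val : ℕ) : ZMod (p ^ (m - 1))) : ZMod (p ^ (m - 1))).val
      = e.val % p ^ (m - 1) := ZMod.val_natCast _ _
  unfold L
  rw [h1]
  have : ((e.val % p ^ (m - 1) + e.val / p ^ (m - 1) * p ^ (m - 1) : ℕ)
      : ZMod (p ^ m)) = ((e.val : ℕ) : ZMod (p ^ m)) := by
    rw [Nat.mod_add_div']
  push_cast at this ⊢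
  rw [this]
  simp [ZMod.natCast_val, ZMod.cast_id]

lemma c_eq (hp : p.Prime) (hm : 1 ≤ m) (e : ZMod (p ^ m)) :
    c p m e = ((e.val / p ^ (m - 1) : ℕ) : ZMod p) := by
  conv_lhs => rw [decomp p m hp hm e]
  rw [c_add_nsmul p m hp hm, c_L p m hp hm, zero_add]

lemma main (hp : p.Prime) (hm : 1 ≤ m) (e₁ e₂ : ZMod (p ^ m)) :
    c p m (2 * e₂ - e₁)
      = 2 * c p m e₂ - c p m e₁
        + c p m (2 * L p m ((e₂.val : ℕ) : ZMod (p ^ (m - 1)))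
            - L p m ((e₁.val : ℕ) : ZMod (p ^ (m - 1)))) := by
  set B := 2 * L p m ((e₂.val : ℕ) : ZMod (p ^ (m - 1)))
      - L p m ((e₁.val : ℕ) : ZMod (p ^ (m - 1))) with hB
  set d₁ : ℕ := e₁.val / p ^ (m - 1) with hd₁
  set d₂ : ℕ := e₂.val / p ^ (m - 1) with hd₂
  have h1 : 2 * e₂ - e₁ = B + ((2 * d₂ : ℕ) : ZMod (p ^ m)) * ((p ^ (m - 1) : ℕ) : ZMod (p ^ m)) - (d₁ : ℕ) * ((p ^ (m - 1) : ℕ) : ZMod (p ^ m)) := by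
    conv_lhs => rw [decomp p m hp hm e₁, decomp p m hp hm e₂]
    push_cast
    ring
  rw [h1, c_sub_nsmul p m hp hm, c_add_nsmul p m hp hm,
    c_eq p m hp hm e₁, c_eq p m hp hm e₂]
  push_cast
  ring

end DihedralAux2


theorem dihedral_prime_power_alexander_extension (p m : ℕ) (hp : p.Prime)
    (hm : 1 < m)
    (f : ZMod (p ^ m) → ZMod p × ZMod (p ^ (m - 1)))
    (hf : ∀ A : ZMod (p ^ m),
      f A = (((A.val / p ^ (m - 1) : ℕ) : ZMod p), ((A.val : ℕ) : ZMod (p ^ (m - 1))))) :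
    Function.Bijective f ∧
    ∃ φ : ZMod (p ^ (m - 1)) → ZMod (p ^ (m - 1)) → ZMod p,
      (∀ e₁ e₂ : ZMod (p ^ m),
        f (2 * e₂ - e₁) =
          (2 * (f e₂).1 - (f e₁).1 + φ (f e₁).2 (f e₂).2,
            2 * (f e₂).2 - (f e₁).2)) ∧
      (∀ x₁ x₂ x₃ : ZMod (p ^ (m - 1)),
        -φ x₁ x₂ + φ (2 * x₂ - x₁) x₃ =
          -φ x₁ x₃ + 2 * φ x₂ x₃ + φ (2 * x₃ - x₁) (2 * x₃ - x₂)) ∧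
      (∀ x : ZMod (p ^ (m - 1)), φ x x = 0) := by
  have hm1 : 1 ≤ m := le_of_lt hm
  haveI : NeZero (p ^ m) := ⟨pow_ne_zero _ hp.pos.ne'⟩
  haveI : NeZero (p ^ (m - 1)) := ⟨pow_ne_zero _ hp.pos.ne'⟩
  haveI : NeZero p := ⟨hp.pos.ne'⟩
  have hdvd : p ^ (m - 1) ∣ p ^ m := pow_dvd_pow p (by omega)
  have hqp : p ^ (m - 1) * p = p ^ m := by rw [← pow_succ]; congr 1; omega
  -- the residue map is the ring hom cast
  have hres : ∀ e : ZMod (p ^ m),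
      ((e.val : ℕ) : ZMod (p ^ (m - 1))) = ZMod.castHom hdvd (ZMod (p ^ (m - 1))) e := by
    intro e
    rw [ZMod.castHom_apply, ZMod.natCast_val]
  constructor
  · rw [Fintype.bijective_iff_injective_and_card]
    constructor
    · intro A B h
      rw [hf A, hf B, Prod.mk.injEq] at h
      have h2 : A.val % p ^ (m - 1) = B.val % p ^ (m - 1) := by
        have := (ZMod.natCast_eq_natCast_iff' _ _ _).mp h.2
        simpa using this
      have h1 : A.val / p ^ (m - 1) = B.val / p ^ (m - 1) := by
        have hh := (ZMod.natCast_eq_natCast_iff' _ _ _).mp h.1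
        have hA : A.val / p ^ (m - 1) < p :=
          Nat.div_lt_of_lt_mul (by rw [hqp]; exact ZMod.val_lt A)
        have hB : B.val / p ^ (m - 1) < p :=
          Nat.div_lt_of_lt_mul (by rw [hqp]; exact ZMod.val_lt B)
        rwa [Nat.mod_eq_of_lt hA, Nat.mod_eq_of_lt hB] at hh
      apply ZMod.val_injective
      have hda := Nat.div_add_mod A.val (p ^ (m - 1))
      have hdb := Nat.div_add_mod B.val (p ^ (m - 1))
      rw [← hda, ← hdb, h1, h2]
    · simp only [Fintype.card_prod, ZMod.card]
      rw [mul_comm, hqp]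
  · set φ : ZMod (p ^ (m - 1)) → ZMod (p ^ (m - 1)) → ZMod p :=
      fun x₁ x₂ => DihedralAux.c p m
        (2 * DihedralAux2.L p m x₂ - DihedralAux2.L p m x₁) with hφ
    have hE : ∀ e₁ e₂ : ZMod (p ^ m),
        f (2 * e₂ - e₁) =
          (2 * (f e₂).1 - (f e₁).1 + φ (f e₁).2 (f e₂).2,
            2 * (f e₂).2 - (f e₁).2) := by
      intro e₁ e₂
      rw [hf (2 * e₂ - e₁), hf e₁, hf e₂]
      refine Prod.ext ?_ ?_
      · show ((((2 * e₂ - e₁).val) / p ^ (m - 1) : ℕ) : ZMod p) = _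
        rw [← DihedralAux2.c_eq p m hp hm1, DihedralAux2.main p m hp hm1 e₁ e₂,
          DihedralAux2.c_eq p m hp hm1 e₁, DihedralAux2.c_eq p m hp hm1 e₂]
      · show (((2 * e₂ - e₁).val : ℕ) : ZMod (p ^ (m - 1))) = _
        simp only [hres, map_sub, map_mul, map_ofNat]
    have hx : ∀ x : ZMod (p ^ (m - 1)), (f (DihedralAux2.L p m x)).2 = x := by
      intro x
      rw [hf]
      show (((DihedralAux2.L p m x).val : ℕ) : ZMod (p ^ (m - 1))) = x
      rw [DihedralAux2.val_L p m hp hm1, ZMod.natCast_val, ZMod.cast_id]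
    refine ⟨φ, hE, ?_, ?_⟩
    · intro x₁ x₂ x₃
      set e₁ := DihedralAux2.L p m x₁
      set e₂ := DihedralAux2.L p m x₂
      set e₃ := DihedralAux2.L p m x₃
      have h12 := hE e₁ e₂
      have h13 := hE e₁ e₃
      have h23 := hE e₂ e₃
      have hA := hE (2 * e₂ - e₁) e₃
      have hB := hE (2 * e₃ - e₁) (2 * e₃ - e₂)
      have hx1 : (f e₁).2 = x₁ := hx x₁
      have hx2 : (f e₂).2 = x₂ := hx x₂
      have hx3 : (f e₃).2 = x₃ := hx x₃
      simp only [h12, h13, h23, hx, hx1, hx2, hx3] at hA hB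
      have hid : 2 * e₃ - (2 * e₂ - e₁) = 2 * (2 * e₃ - e₂) - (2 * e₃ - e₁) := by
        ring
      rw [hid] at hA
      have hfst := congrArg Prod.fst (hA.symm.trans hB)
      simp only [] at hfst
      linear_combination hfst
    · intro x
      have h := hE (DihedralAux2.L p m x) (DihedralAux2.L p m x)
      rw [hx] at h
      have h2 : 2 * DihedralAux2.L p m x - DihedralAux2.L p m x
          = DihedralAux2.L p m x := by ring
      rw [h2] at h
      have hfst := congrArg Prod.fst h
      simp only [] at hfst
      linear_combination -hfst
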